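/- Let R be a commutative ring and let 𝖰 : Fun(Γ₊,R) → R-mod be a left adjoint of 𝖳. Then for every R-module M, the left derived functors of 𝖰 satisfy L₀𝖰(𝖳(M)) ≅ M and Lᵢ𝖰(𝖳(M)) = 0 for all i > 0. -/

import Mathlib

open CategoryTheory Limits

/-- `Γ₊`: the category of finite pointed sets. -/
abbrev GammaPlus : Type 1 := CategoryTheory.ObjectProperty.FullSubcategory (fun X : Pointed => Finite X.X)

/-- `[n]₊ ∈ Γ₊`: the pointed set with `n` non-basepoint elements and basepoint `o = none`. -/
def GammaPlus.of (n : ℕ) : GammaPlus := ⟨⟨Option (Fin n), none⟩, inferInstance⟩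

/-- The set of non-basepoint elements of a finite pointed set. -/
def GammaPlus.nb (S : GammaPlus) : Type := {s : S.obj.X // s ≠ S.obj.point}

variable (R : Type) [CommRing R]

open Classical in
/-- The linear map underlying the action of `𝖳(M)` on a pointed map `f : S ⟶ S'`:
the summand indexed by `s` is sent (identically) to the summand indexed by `f(s)`,
and to zero if `f(s) = o`. -/
noncomputable def spanTMapAux (M : ModuleCat R) {S S' : GammaPlus} (f : S ⟶ S') :
    (GammaPlus.nb S →₀ M) →ₗ[R] (GammaPlus.nb S' →₀ M) :=
  Finsupp.lsum R fun s =>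
    if h : f.hom.toFun s.1 ≠ S'.obj.point then Finsupp.lsingle (⟨f.hom.toFun s.1, h⟩ : GammaPlus.nb S')
    else 0

open Classical in
lemma spanTMapAux_single (M : ModuleCat R) {S S' : GammaPlus} (f : S ⟶ S') (s : GammaPlus.nb S)
    (m : M) :
    spanTMapAux R M f (Finsupp.single s m) =
      if h : f.hom.toFun s.1 ≠ S'.obj.point then Finsupp.single (⟨f.hom.toFun s.1, h⟩ : GammaPlus.nb S') m
      else 0 := by
  unfold spanTMapAux
  rw [Finsupp.lsum_single]
  split_ifs with h <;> rfl

lemma spanTMapAux_id (M : ModuleCat R) (S : GammaPlus) :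
    spanTMapAux R M (𝟙 S) = LinearMap.id := by
  apply Finsupp.lhom_ext
  intro s m
  rw [spanTMapAux_single, LinearMap.id_apply]
  split_ifs with h
  · rfl
  · exact absurd s.2 h

lemma spanTMapAux_comp (M : ModuleCat R) {S S' S'' : GammaPlus} (f : S ⟶ S') (g : S' ⟶ S'') :
    spanTMapAux R M (f ≫ g) = (spanTMapAux R M g).comp (spanTMapAux R M f) := by
  apply Finsupp.lhom_ext
  intro s m
  rw [LinearMap.comp_apply, spanTMapAux_single, spanTMapAux_single]
  by_cases h1 : f.hom.toFun s.1 ≠ S'.obj.point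
  · rw [dif_pos h1]
    erw [spanTMapAux_single]
    split_ifs with hA hB hB
    · rfl
    · exact absurd hA hB
    · exact absurd hB hA
    · rfl
  · rw [dif_neg h1]
    erw [map_zero]
    have hg : g.hom.toFun (f.hom.toFun s.1) = S''.obj.point := by
      rw [not_not.mp h1]; exact g.hom.map_point
    split_ifs with hA
    · exact absurd hg hA
    · rfl

lemma spanTMapAux_natural {M N : ModuleCat R} (φ : M ⟶ N) {S S' : GammaPlus} (f : S ⟶ S') :
    (Finsupp.mapRange.linearMap (α := GammaPlus.nb S') φ.hom).comp (spanTMapAux R M f)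
      = (spanTMapAux R N f).comp (Finsupp.mapRange.linearMap φ.hom) := by
  apply Finsupp.lhom_ext
  intro s m
  rw [LinearMap.comp_apply, LinearMap.comp_apply, spanTMapAux_single]
  erw [Finsupp.mapRange.linearMap_apply, Finsupp.mapRange.linearMap_apply,
    Finsupp.mapRange_single, spanTMapAux_single]
  by_cases h : f.hom.toFun s.1 ≠ S'.obj.point
  · rw [dif_pos h, dif_pos h]
    erw [Finsupp.mapRange_single]; rfl
  · rw [dif_neg h, dif_neg h]
    erw [Finsupp.mapRange_zero]; rfl

/-- The functor `𝖳 : R-mod ⥤ Fun(Γ₊, R)`, with `𝖳(M)(S) = ⊕_{s ∈ S∖{o}} M`;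
a pointed map `f` sends the summand indexed by `s` identically to the summand indexed
by `f(s)`, and to zero if `f(s) = o`. -/
noncomputable def spanT : ModuleCat R ⥤ (GammaPlus ⥤ ModuleCat R) where
  obj M :=
    { obj := fun S => ModuleCat.of R (GammaPlus.nb S →₀ M)
      map := fun f => ModuleCat.ofHom (spanTMapAux R M f)
      map_id := fun S => ModuleCat.hom_ext (spanTMapAux_id R M S)
      map_comp := fun f g => ModuleCat.hom_ext (spanTMapAux_comp R M f g) }
  map {M N} φ :=
    { app := fun S => ModuleCat.ofHom (Finsupp.mapRange.linearMap φ.hom)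
      naturality := fun {S S'} f => ModuleCat.hom_ext (spanTMapAux_natural R φ f) }
  map_id M := by
    ext S : 2
    exact ModuleCat.hom_ext Finsupp.mapRange.linearMap_id
  map_comp φ ψ := by
    ext S : 2
    exact ModuleCat.hom_ext (Finsupp.mapRange.linearMap_comp _ _)

/-- The reduced span functor `T ∈ Fun(Γ₊, R)`, `T(S) = ⊕_{s ∈ S∖{o}} R`. -/
noncomputable def reducedSpan : GammaPlus ⥤ ModuleCat R := (spanT R).obj (ModuleCat.of R R)

/-- A left adjoint between abelian categories is additive. -/
lemma Q_additive (R : Type) [CommRing R]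
    (Q : (GammaPlus ⥤ ModuleCat R) ⥤ ModuleCat R) (adj : Q ⊣ spanT R) : Q.Additive := by
  letI := adj.leftAdjoint_preservesColimits
  letI : PreservesColimitsOfShape (Discrete WalkingPair) Q := by infer_instance
  letI := Limits.preservesBinaryBiproducts_of_preservesBinaryCoproducts Q
  exact Functor.additive_of_preservesBinaryBiproducts Q


namespace GammaPlus

def star : GammaPlus.nb (GammaPlus.of 1) := ⟨some 0, by simp [GammaPlus.of]⟩

instance : Unique (GammaPlus.nb (GammaPlus.of 1)) where
  default := star
  uniq a := by
    obtain ⟨(_|i), hi⟩ := a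
    · exact absurd rfl hi
    · have : i = 0 := Subsingleton.elim _ _
      subst this; rfl

/-- the map `[1]₊ ⟶ S` sending the non-basepoint to `s`. -/
def sigma (S : GammaPlus) (s : GammaPlus.nb S) : GammaPlus.of 1 ⟶ S :=
  ⟨fun x => x.elim S.obj.point (fun _ => s.1), rfl⟩

lemma sigma_star_ne (S : GammaPlus) (s : GammaPlus.nb S) :
    (sigma S s).hom.toFun star.1 ≠ S.obj.point := s.2

/-- the constant map -/
def const (S S' : GammaPlus) : S ⟶ S' := ⟨fun _ => S'.obj.point, rfl⟩

lemma const_toFun {S S' : GammaPlus} (x : S.obj.X) :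
    (const S S').hom.toFun x = S'.obj.point := rfl

lemma sigma_comp_ne {S S' : GammaPlus} (s : GammaPlus.nb S) (h : S ⟶ S')
    (hs : h.hom.toFun s.1 ≠ S'.obj.point) :
    sigma S s ≫ h = sigma S' ⟨h.hom.toFun s.1, hs⟩ := by
  apply InducedCategory.hom_ext
  apply Pointed.Hom.ext
  funext x
  cases x with
  | none => show h.hom.toFun (S.obj.point) = _ ; rw [h.hom.map_point]; rfl
  | some i => rfl

lemma sigma_comp_eq {S S' : GammaPlus} (s : GammaPlus.nb S) (h : S ⟶ S')
    (hs : h.hom.toFun s.1 = S'.obj.point) :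
    sigma S s ≫ h = const (GammaPlus.of 1) (GammaPlus.of 1) ≫ const _ S' := by
  apply InducedCategory.hom_ext
  apply Pointed.Hom.ext
  funext x
  cases x with
  | none => show h.hom.toFun (S.obj.point) = _ ; rw [h.hom.map_point]; rfl
  | some i => exact hs

lemma const_comp_const :
    const (GammaPlus.of 1) (GammaPlus.of 1) ≫ const (GammaPlus.of 1) (GammaPlus.of 1)
      = const _ _ := by
  apply InducedCategory.hom_ext
  apply Pointed.Hom.ext; funext x; rfl

lemma single_star_eq {N : Type*} [AddCommMonoid N] (y : GammaPlus.nb (GammaPlus.of 1) →₀ N) :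
    Finsupp.single star (y star) = y :=
  Finsupp.ext fun a => by rw [Subsingleton.elim a star, Finsupp.single_eq_same]

end GammaPlus

section TM

variable (M : ModuleCat R)

lemma spanT_map_sigma_single (S : GammaPlus) (s : GammaPlus.nb S) (m : M) :
    ((spanT R).obj M).map (GammaPlus.sigma S s) (Finsupp.single GammaPlus.star m)
      = Finsupp.single s m := by
  show spanTMapAux R M _ _ = _
  rw [spanTMapAux_single, dif_pos (GammaPlus.sigma_star_ne S s)]
  congr 1

lemma spanT_map_point_single {S S' : GammaPlus} (f : S ⟶ S') (s : GammaPlus.nb S) (m : M)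
    (hs : f.hom.toFun s.1 = S'.obj.point) :
    ((spanT R).obj M).map f (Finsupp.single s m) = 0 := by
  show spanTMapAux R M _ _ = _
  rw [spanTMapAux_single, dif_neg (by simpa using hs)]
  rfl

end TM

instance : (spanT R).Faithful where
  map_injective {M N} {φ ψ} h := by
    apply ModuleCat.hom_ext
    apply LinearMap.ext
    intro m
    have h1 : ((spanT R).map φ).app (GammaPlus.of 1) (Finsupp.single GammaPlus.star m)
        = ((spanT R).map ψ).app (GammaPlus.of 1) (Finsupp.single GammaPlus.star m) := by rw [h]
    have h2 : (Finsupp.mapRange.linearMap φ.hom) (Finsupp.single GammaPlus.star m)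
        = (Finsupp.mapRange.linearMap ψ.hom) (Finsupp.single GammaPlus.star m) := h1
    rw [Finsupp.mapRange.linearMap_apply, Finsupp.mapRange.linearMap_apply,
      Finsupp.mapRange_single, Finsupp.mapRange_single] at h2
    simpa using DFunLike.congr_fun h2 GammaPlus.star

instance : (spanT R).Full where
  map_surjective {M N} η := by
    refine ⟨ModuleCat.ofHom ((Finsupp.lapply GammaPlus.star) ∘ₗ (η.app (GammaPlus.of 1)).hom ∘ₗ
      (Finsupp.lsingle GammaPlus.star)), ?_⟩
    set φ : M ⟶ N := ModuleCat.ofHom ((Finsupp.lapply GammaPlus.star) ∘ₗ (η.app (GammaPlus.of 1)).hom ∘ₗ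
      (Finsupp.lsingle GammaPlus.star)) with hφ
    ext S : 2
    apply ModuleCat.hom_ext
    apply Finsupp.lhom_ext
    intro s m
    set y : GammaPlus.nb (GammaPlus.of 1) →₀ N :=
      η.app (GammaPlus.of 1) (Finsupp.single GammaPlus.star m) with hy
    have hφm : φ m = y GammaPlus.star := rfl
    have hnat := ConcreteCategory.congr_hom (η.naturality (GammaPlus.sigma S s))
      (Finsupp.single GammaPlus.star m)
    have key : η.app S (Finsupp.single s m) = ((spanT R).obj N).map (GammaPlus.sigma S s) y := by
      rw [← spanT_map_sigma_single R M S s m]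
      exact hnat
    show Finsupp.mapRange.linearMap φ.hom (Finsupp.single s m) = η.app S (Finsupp.single s m)
    have key2 : ((spanT R).obj N).map (GammaPlus.sigma S s) y
        = Finsupp.single s (y GammaPlus.star) := by
      rw [← GammaPlus.single_star_eq y, spanT_map_sigma_single, Finsupp.single_eq_same]
    rw [Finsupp.mapRange.linearMap_apply, Finsupp.mapRange_single, key, key2, hφm]

section Proj

variable (P : ModuleCat R)

lemma lsingle_comp_spanT_map_const :
    (ModuleCat.ofHom (Finsupp.lsingle GammaPlus.star : P →ₗ[R] (GammaPlus.nb (GammaPlus.of 1) →₀ P)) :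
      P ⟶ ((spanT R).obj P).obj (GammaPlus.of 1))
      ≫ ((spanT R).obj P).map (GammaPlus.const (GammaPlus.of 1) (GammaPlus.of 1)) = 0 := by
  apply ModuleCat.hom_ext
  apply LinearMap.ext
  intro m
  show ((spanT R).obj P).map (GammaPlus.const (GammaPlus.of 1) (GammaPlus.of 1))
    (Finsupp.single GammaPlus.star m) = (0 : GammaPlus.nb (GammaPlus.of 1) →₀ P)
  rw [spanT_map_point_single R P _ _ m rfl]
  rfl

lemma spanT_obj_projective [Projective P] : Projective ((spanT R).obj P) := by
  constructor
  intro E X f e he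
  classical
  let S₁ := GammaPlus.of 1
  let ρ : S₁ ⟶ S₁ := GammaPlus.const _ _
  let u : P ⟶ E.obj S₁ :=
    Projective.factorThru ((ModuleCat.ofHom (Finsupp.lsingle GammaPlus.star :
      P →ₗ[R] (GammaPlus.nb S₁ →₀ P)) : P ⟶ ((spanT R).obj P).obj S₁) ≫ f.app S₁) (e.app S₁)
  let v : P ⟶ E.obj S₁ := u - u ≫ E.map ρ
  have hu : u ≫ e.app S₁ = (ModuleCat.ofHom (Finsupp.lsingle GammaPlus.star :
      P →ₗ[R] (GammaPlus.nb S₁ →₀ P)) : P ⟶ ((spanT R).obj P).obj S₁) ≫ f.app S₁ := Projective.factorThru_comp _ _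
  have hρρ : ρ ≫ ρ = ρ := GammaPlus.const_comp_const
  have hv0 : v ≫ E.map ρ = 0 := by
    simp only [v, Preadditive.sub_comp, Category.assoc, ← E.map_comp, hρρ, sub_self]
  have hev : v ≫ e.app S₁ = (ModuleCat.ofHom (Finsupp.lsingle GammaPlus.star :
      P →ₗ[R] (GammaPlus.nb S₁ →₀ P)) : P ⟶ ((spanT R).obj P).obj S₁) ≫ f.app S₁ := by
    have h1 : (u ≫ E.map ρ) ≫ e.app S₁ = 0 := by
      erw [Category.assoc, e.naturality ρ, ← Category.assoc, hu, Category.assoc,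
        ← f.naturality ρ, ← Category.assoc, lsingle_comp_spanT_map_const, zero_comp]
    simp only [v, Preadditive.sub_comp, h1, sub_zero, hu]
  have eB : ∀ (SS : GammaPlus) (t : GammaPlus.nb SS) (m : P),
      (Finsupp.lsum R fun s' => ((v ≫ E.map (GammaPlus.sigma SS s')).hom : P →ₗ[R] E.obj SS))
        (Finsupp.single t m) = E.map (GammaPlus.sigma SS t) (v m) := by
    intro SS t m
    rw [Finsupp.lsum_single]
    rfl
  refine ⟨{ app := fun S => ModuleCat.ofHom (Finsupp.lsum R (fun s =>
              ((v ≫ E.map (GammaPlus.sigma S s)).hom : P →ₗ[R] E.obj S))),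
            naturality := ?_ }, ?_⟩
  · intro S S' h
    apply ModuleCat.hom_ext
    apply Finsupp.lhom_ext
    intro s m
    by_cases hs : h.hom.toFun s.1 ≠ S'.obj.point
    · have eA : ((spanT R).obj P).map h (Finsupp.single s m)
          = Finsupp.single (⟨h.hom.toFun s.1, hs⟩ : GammaPlus.nb S') m := by
        show spanTMapAux R P _ _ = _
        rw [spanTMapAux_single, dif_pos hs]
      have eC : E.map h (E.map (GammaPlus.sigma S s) (v m))
          = E.map (GammaPlus.sigma S' ⟨h.hom.toFun s.1, hs⟩) (v m) := by
        rw [← GammaPlus.sigma_comp_ne s h hs, E.map_comp]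
        rfl
      calc (Finsupp.lsum R fun s' => ((v ≫ E.map (GammaPlus.sigma S' s')).hom : P →ₗ[R] E.obj S'))
            (((spanT R).obj P).map h (Finsupp.single s m))
          = (Finsupp.lsum R fun s' => ((v ≫ E.map (GammaPlus.sigma S' s')).hom : P →ₗ[R] E.obj S'))
            (Finsupp.single (⟨h.hom.toFun s.1, hs⟩ : GammaPlus.nb S') m) := congrArg _ eA
        _ = E.map (GammaPlus.sigma S' ⟨h.hom.toFun s.1, hs⟩) (v m) := eB S' _ m
        _ = E.map h (E.map (GammaPlus.sigma S s) (v m)) := eC.symm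
        _ = E.map h ((Finsupp.lsum R fun s' =>
              ((v ≫ E.map (GammaPlus.sigma S s')).hom : P →ₗ[R] E.obj S))
              (Finsupp.single s m)) := congrArg _ (eB S s m).symm
    · push_neg at hs
      have eA0 : ((spanT R).obj P).map h (Finsupp.single s m) = 0 :=
        spanT_map_point_single R P h s m hs
      have eC0 : E.map h (E.map (GammaPlus.sigma S s) (v m)) = 0 := by
        have hstep : E.map (GammaPlus.sigma S s ≫ h) (v m) = 0 := by
          rw [GammaPlus.sigma_comp_eq s h hs, E.map_comp]
          have h0 : E.map (GammaPlus.const S₁ S₁) (v m) = (0 : E.obj S₁) :=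
            ConcreteCategory.congr_hom hv0 m
          show E.map (GammaPlus.const S₁ S') (E.map (GammaPlus.const S₁ S₁) (v m)) = 0
          rw [h0, map_zero]
        calc E.map h (E.map (GammaPlus.sigma S s) (v m))
            = E.map (GammaPlus.sigma S s ≫ h) (v m) := by rw [E.map_comp]; rfl
          _ = 0 := hstep
      calc (Finsupp.lsum R fun s' => ((v ≫ E.map (GammaPlus.sigma S' s')).hom : P →ₗ[R] E.obj S'))
            (((spanT R).obj P).map h (Finsupp.single s m))
          = (Finsupp.lsum R fun s' => ((v ≫ E.map (GammaPlus.sigma S' s')).hom : P →ₗ[R] E.obj S'))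
            0 := congrArg _ eA0
        _ = 0 := map_zero _
        _ = E.map h (E.map (GammaPlus.sigma S s) (v m)) := eC0.symm
        _ = E.map h ((Finsupp.lsum R fun s' =>
              ((v ≫ E.map (GammaPlus.sigma S s')).hom : P →ₗ[R] E.obj S))
              (Finsupp.single s m)) := congrArg _ (eB S s m).symm
  · apply NatTrans.ext
    funext S
    apply ModuleCat.hom_ext
    apply Finsupp.lhom_ext
    intro s m
    have h1 : e.app S (E.map (GammaPlus.sigma S s) (v m))
        = X.map (GammaPlus.sigma S s) (e.app S₁ (v m)) :=
      ConcreteCategory.congr_hom (e.naturality (GammaPlus.sigma S s)) (v m)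
    have h2 : e.app S₁ (v m) = f.app S₁ (Finsupp.single GammaPlus.star m) :=
      ConcreteCategory.congr_hom hev m
    have h3 : X.map (GammaPlus.sigma S s) (f.app S₁ (Finsupp.single GammaPlus.star m))
        = f.app S (((spanT R).obj P).map (GammaPlus.sigma S s)
            (Finsupp.single GammaPlus.star m)) :=
      (ConcreteCategory.congr_hom (f.naturality (GammaPlus.sigma S s))
        (Finsupp.single GammaPlus.star m)).symm
    calc e.app S ((Finsupp.lsum R fun s' =>
            ((v ≫ E.map (GammaPlus.sigma S s')).hom : P →ₗ[R] E.obj S)) (Finsupp.single s m))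
        = e.app S (E.map (GammaPlus.sigma S s) (v m)) := congrArg _ (eB S s m)
      _ = X.map (GammaPlus.sigma S s) (e.app S₁ (v m)) := h1
      _ = X.map (GammaPlus.sigma S s) (f.app S₁ (Finsupp.single GammaPlus.star m)) :=
          congrArg _ h2
      _ = f.app S (((spanT R).obj P).map (GammaPlus.sigma S s)
            (Finsupp.single GammaPlus.star m)) := h3
      _ = f.app S (Finsupp.single s m) := congrArg _ (spanT_map_sigma_single R P S s m)

end Proj

instance : (spanT R).Additive where
  map_add {M N f g} := by
    ext S : 2
    apply ModuleCat.hom_ext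
    apply Finsupp.lhom_ext
    intro s m
    show Finsupp.mapRange.linearMap (f + g).hom (Finsupp.single s m)
      = Finsupp.mapRange.linearMap f.hom (Finsupp.single s m)
        + Finsupp.mapRange.linearMap g.hom (Finsupp.single s m)
    rw [Finsupp.mapRange.linearMap_apply, Finsupp.mapRange.linearMap_apply,
      Finsupp.mapRange.linearMap_apply, Finsupp.mapRange_single, Finsupp.mapRange_single,
      Finsupp.mapRange_single, ModuleCat.hom_add, LinearMap.add_apply, Finsupp.single_add]

lemma spanT_map_eval_exact (S : ShortComplex (ModuleCat R)) (hS : S.Exact) (a : GammaPlus) :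
    ((S.map (spanT R)).map ((evaluation GammaPlus (ModuleCat R)).obj a)).Exact := by
  rw [ShortComplex.moduleCat_exact_iff]
  intro y hy
  let y' : GammaPlus.nb a →₀ S.X₂ := y
  have hy' : (Finsupp.mapRange.linearMap (α := GammaPlus.nb a) S.g.hom) y' = 0 := hy
  have hker : ∀ s : GammaPlus.nb a, S.g.hom (y' s) = 0 := by
    intro s
    have := DFunLike.congr_fun hy' s
    rwa [Finsupp.mapRange.linearMap_apply, Finsupp.mapRange_apply] at this
  have hex : ∀ s : GammaPlus.nb a, ∃ x1 : S.X₁, S.f.hom x1 = y' s := by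
    intro s
    exact (ShortComplex.moduleCat_exact_iff S).mp hS (y' s) (hker s)
  classical
  refine ⟨∑ s ∈ y'.support, Finsupp.single s ((hex s).choose), ?_⟩
  show (Finsupp.mapRange.linearMap (α := GammaPlus.nb a) S.f.hom)
      (∑ s ∈ y'.support, Finsupp.single s ((hex s).choose)) = y'
  calc (Finsupp.mapRange.linearMap (α := GammaPlus.nb a) S.f.hom)
        (∑ s ∈ y'.support, Finsupp.single s ((hex s).choose))
      = ∑ s ∈ y'.support, (Finsupp.mapRange.linearMap (α := GammaPlus.nb a) S.f.hom)
          (Finsupp.single s ((hex s).choose)) := map_sum _ _ _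
    _ = ∑ s ∈ y'.support, Finsupp.single s (y' s) := by
        refine Finset.sum_congr rfl (fun s _ => ?_)
        rw [Finsupp.mapRange.linearMap_apply, Finsupp.mapRange_single, (hex s).choose_spec]
    _ = y' := Finsupp.sum_single y'

lemma spanT_map_exact (S : ShortComplex (ModuleCat R)) (hS : S.Exact) :
    (S.map (spanT R)).Exact := by
  rw [ShortComplex.exact_iff_isZero_homology]
  refine Functor.isZero _ (fun a => ?_)
  haveI : PreservesFiniteLimits ((evaluation GammaPlus (ModuleCat R)).obj a) := by
    infer_instance
  haveI : PreservesFiniteColimits ((evaluation GammaPlus (ModuleCat R)).obj a) := by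
    infer_instance
  have e := ShortComplex.mapHomologyIso (S.map (spanT R))
    ((evaluation GammaPlus (ModuleCat R)).obj a)
  have hz : IsZero (((S.map (spanT R)).map
      ((evaluation GammaPlus (ModuleCat R)).obj a)).homology) := by
    rw [← ShortComplex.exact_iff_isZero_homology]
    exact spanT_map_eval_exact R S hS a
  exact IsZero.of_iso hz e.symm

lemma spanT_preservesHomology : (spanT R).PreservesHomology :=
  (((spanT R).exact_tfae).out 1 2).mp (fun S hS => spanT_map_exact R S hS)

/-- For a left adjoint `𝖰` of `𝖳`, the left derived functors satisfy `L₀𝖰(𝖳(M)) ≅ M` and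
`Lᵢ𝖰(𝖳(M)) = 0` for `i > 0`.  (`Fun(Γ₊, R)` has enough projectives, so the left derived
functors of the right exact functor `𝖰` are defined.) -/
theorem leftDerived_Q_spanT (R : Type) [CommRing R]
    [EnoughProjectives (GammaPlus ⥤ ModuleCat R)]
    (Q : (GammaPlus ⥤ ModuleCat R) ⥤ ModuleCat R) (adj : Q ⊣ spanT R)
    (M : ModuleCat R) :
    letI : Q.Additive := Q_additive R Q adj
    Nonempty ((Q.leftDerived 0).obj ((spanT R).obj M) ≅ M) ∧
    ∀ i : ℕ, 0 < i → IsZero ((Q.leftDerived i).obj ((spanT R).obj M)) := by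
  letI : Q.Additive := Q_additive R Q adj
  haveI : (spanT R).PreservesHomology := spanT_preservesHomology R
  obtain ⟨P⟩ := (HasProjectiveResolution.out (Z := M))
  haveI : ∀ n, Projective
      ((((spanT R).mapHomologicalComplex (ComplexShape.down ℕ)).obj P.complex).X n) :=
    fun n => spanT_obj_projective R (P.complex.X n)
  let P' : ProjectiveResolution ((spanT R).obj M) :=
    { complex := ((spanT R).mapHomologicalComplex (ComplexShape.down ℕ)).obj P.complex
      π := ((spanT R).mapHomologicalComplex (ComplexShape.down ℕ)).map P.π ≫
        ((HomologicalComplex.singleMapHomologicalComplex (spanT R)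
          (ComplexShape.down ℕ) 0).hom.app M) }
  -- The isomorphism of complexes `Q(T(P.complex)) ≅ P.complex` via the counit
  let cIso : (Q.mapHomologicalComplex (ComplexShape.down ℕ)).obj P'.complex ≅ P.complex :=
    HomologicalComplex.Hom.isoOfComponents
      (fun n => @asIso _ _ _ _ (adj.counit.app (P.complex.X n))
        (Adjunction.instIsIsoAppCounitOfFullOfFaithful adj _))
      (fun i j _ => by
        have := adj.counit.naturality (P.complex.d i j)
        exact this.symm)
  -- The common iso with the homology of the single complex
  have E : ∀ i : ℕ, (Q.leftDerived i).obj ((spanT R).obj M) ≅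
      (((ChainComplex.single₀ (ModuleCat R)).obj M)).homology i := by
    intro i
    refine P'.isoLeftDerivedObj Q i ≪≫
      (HomologicalComplex.homologyFunctor (ModuleCat R) (ComplexShape.down ℕ) i).mapIso cIso
      ≪≫ ?_
    exact isoOfQuasiIsoAt P.π i
  constructor
  · exact ⟨E 0 ≪≫ HomologicalComplex.singleObjHomologySelfIso (ComplexShape.down ℕ) 0 M⟩
  · intro i hi
    obtain ⟨n, rfl⟩ := Nat.exists_eq_add_of_lt hi
    rw [Nat.zero_add]
    refine IsZero.of_iso ?_ (E (n + 1))
    rw [← HomologicalComplex.exactAt_iff_isZero_homology]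
    exact ChainComplex.exactAt_succ_single_obj M n
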